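/- Suppose |a|_p < α < β for f(x)=(ax²+bx)/(x²+dx+b) on ℂ_p. Then the fixed point x₂ = a-d satisfies |x₂|_p = β and |f'(x₂)|_p = β/α > 1, so x₂ is repelling. -/

import Mathlib

open IsUltrametricDist in
lemma add_norm_eq_of_lt {K : Type*} [NontriviallyNormedField K] [IsUltrametricDist K]
    {x y : K} (h : ‖x‖ < ‖y‖) : ‖x + y‖ = ‖y‖ := by
  rw [norm_add_eq_max_of_norm_ne_norm h.ne, max_eq_right h.le]

/-- Case `|a| < α < β`: the fixed point `x₂ = a - d` satisfies `|x₂| = β`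
and `|f'(x₂)| = β/α > 1`, so `x₂` is repelling. -/
theorem stmt12 {K : Type*} [NontriviallyNormedField K] [IsAlgClosed K]
    [IsUltrametricDist K] (a b d z₁ z₂ : K) (hab : a*b ≠ 0) (had : a ≠ d)
    (hsum : z₁ + z₂ = -d) (hprod : z₁ * z₂ = b)
    (ha : ‖a‖ < ‖z₁‖) (hαβ : ‖z₁‖ < ‖z₂‖) :
    ‖a - d‖ = ‖z₂‖ ∧
    (∃ L : K, HasDerivAt (fun x : K => (a*x^2 + b*x)/(x^2 + d*x + b)) L (a - d) ∧
      ‖L‖ = ‖z₂‖/‖z₁‖) ∧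
    1 < ‖z₂‖/‖z₁‖ := by
  have hα0 : 0 < ‖z₁‖ := lt_of_le_of_lt (norm_nonneg a) ha
  have hβ0 : 0 < ‖z₂‖ := hα0.trans hαβ
  have hd : ‖d‖ = ‖z₂‖ := by
    rw [show d = -(z₁ + z₂) by rw [hsum]; ring, norm_neg]
    exact add_norm_eq_of_lt hαβ
  have hb : ‖b‖ = ‖z₁‖ * ‖z₂‖ := by rw [← hprod, norm_mul]
  have hx2 : ‖a - d‖ = ‖z₂‖ := by
    rw [show a - d = a + -d by ring, add_norm_eq_of_lt (by rw [norm_neg, hd]; exact ha.trans hαβ),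
      norm_neg, hd]
  -- denominator at x₂
  have hDval : (a-d)^2 + d*(a-d) + b = a*(a-d) + b := by ring
  have hDnorm : ‖(a-d)^2 + d*(a-d) + b‖ = ‖z₁‖ * ‖z₂‖ := by
    rw [hDval, add_norm_eq_of_lt, hb]
    rw [norm_mul, hx2, hb]
    exact mul_lt_mul_of_pos_right ha hβ0
  have hD : (a-d)^2 + d*(a-d) + b ≠ 0 := by
    intro h
    rw [h, norm_zero] at hDnorm
    exact (mul_pos hα0 hβ0).ne hDnorm
  refine ⟨hx2, ?_, (one_lt_div hα0).mpr hαβ⟩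
  -- derivative
  have hnum : HasDerivAt (fun x : K => a*x^2 + b*x) (2*a*(a-d) + b) (a-d) := by
    have h1 : HasDerivAt (fun x : K => x) 1 (a-d) := hasDerivAt_id _
    have := ((h1.pow 2).const_mul a).add (h1.const_mul b)
    simpa [Pi.add_def] using this.congr_deriv (by ring)
  have hden : HasDerivAt (fun x : K => x^2 + d*x + b) (2*(a-d) + d) (a-d) := by
    have h1 : HasDerivAt (fun x : K => x) 1 (a-d) := hasDerivAt_id _
    have := ((h1.pow 2).add (h1.const_mul d)).add_const b
    simpa using this.congr_deriv (by ring)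
  have hdiv := hnum.div hden hD
  refine ⟨_, hdiv, ?_⟩
  have hL : ((2*a*(a-d) + b) * ((a-d)^2 + d*(a-d) + b) -
      (a*(a-d)^2 + b*(a-d)) * (2*(a-d) + d)) / ((a-d)^2 + d*(a-d) + b)^2
      = (b + (a-d)*d) / (a*(a-d) + b) := by
    rw [div_eq_div_iff (pow_ne_zero 2 hD) (by rwa [← hDval])]
    ring
  rw [hL, norm_div]
  have hnum2 : ‖b + (a-d)*d‖ = ‖z₂‖ * ‖z₂‖ := by
    rw [add_norm_eq_of_lt, norm_mul, hx2, hd]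
    rw [norm_mul, hx2, hd, hb]
    exact mul_lt_mul_of_pos_right hαβ hβ0
  rw [hnum2, ← hDval, hDnorm]
  field_simp
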